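/- arXiv:1901.07170 — 2 statements merged into one kernel-verified Lean document; each statement's English description precedes it below -/
import Mathlib

section
/- Let h : ℕ → ℕ be monotone and inflationary. Then for every ordinal α ≤ ω^ω, the Hardy function h^α is monotone and inflationary: for all x ≤ y in ℕ, x ≤ h^α(x) ≤ h^α(y). -/
noncomputable section

namespace HardyCNF

open Ordinal

/-- Find the first nonzero entry of a (little-endian) coefficient list:
returns `(k, c, rest)` when the list is `replicate k 0 ++ (c+1) :: rest`. -/
def splitNZ : List ℕ → Option (ℕ × ℕ × List ℕ)
  | [] => none
  | 0 :: t => (splitNZ t).map (fun x => (x.1 + 1, x.2))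
  | (c+1) :: t => some (0, c, t)

theorem splitNZ_eq : ∀ {ℓ : List ℕ} {k c : ℕ} {r : List ℕ},
    splitNZ ℓ = some (k, c, r) → ℓ = List.replicate k 0 ++ (c+1) :: r := by
  intro ℓ
  induction ℓ with
  | nil => intro k c r h; simp [splitNZ] at h
  | cons hd t ih =>
    intro k c r h
    match hd with
    | 0 =>
      simp only [splitNZ, Option.map_eq_some_iff] at h
      obtain ⟨⟨k', c', r'⟩, hs, he⟩ := h
      obtain ⟨h1, h2, h3⟩ : k' + 1 = k ∧ c' = c ∧ r' = r := by
        simpa using he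
      subst h1 h2 h3
      simp [List.replicate_succ, ih hs]
    | c'+1 =>
      simp only [splitNZ, Option.some.injEq] at h
      obtain ⟨h1, h2, h3⟩ : (0 : ℕ) = k ∧ c' = c ∧ t = r := by simpa using h
      subst h1 h2 h3
      simp

/-- The ordinal `ω^0·c_0 + ω^1·c_1 + ⋯` denoted by a little-endian coefficient list. -/
def toOrd : List ℕ → Ordinal.{0}
  | [] => 0
  | c :: ℓ => omega0 * toOrd ℓ + c

theorem toOrd_replicate_zero_append (k : ℕ) (ℓ : List ℕ) :
    toOrd (List.replicate k 0 ++ ℓ) = omega0 ^ (k : Ordinal) * toOrd ℓ := by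
  induction k with
  | zero => simp [toOrd]
  | succ n ih =>
    rw [List.replicate_succ, List.cons_append]
    show omega0 * toOrd (List.replicate n 0 ++ ℓ) + (0:ℕ) = _
    rw [ih]
    have hcast : ((n+1 : ℕ) : Ordinal) = 1 + (n : Ordinal) := by
      have : ((1+n : ℕ) : Ordinal) = 1 + (n : Ordinal) := by push_cast; ring_nf
      rw [← this, Nat.add_comm]
    rw [hcast, opow_add, opow_one, mul_assoc]
    simp

theorem toOrd_succ_lt (c : ℕ) (ℓ : List ℕ) : toOrd (c :: ℓ) < toOrd ((c+1) :: ℓ) := by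
  show omega0 * toOrd ℓ + (c : Ordinal) < omega0 * toOrd ℓ + ((c:ℕ)+1 : ℕ)
  apply (add_lt_add_iff_left _).mpr
  push_cast
  exact lt_add_one _

theorem toOrd_limit_lt (x k c : ℕ) (r : List ℕ) :
    toOrd (List.replicate k 0 ++ (x+1) :: c :: r) <
      toOrd (0 :: (List.replicate k 0 ++ (c+1) :: r)) := by
  have h0 : toOrd (0 :: (List.replicate k 0 ++ (c+1) :: r))
      = omega0 * (omega0 ^ (k : Ordinal) * toOrd ((c+1) :: r)) := by
    show omega0 * toOrd (List.replicate k 0 ++ (c+1) :: r) + (0:ℕ) = _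
    rw [toOrd_replicate_zero_append]; simp
  have hsw : omega0 * omega0 ^ (k : Ordinal) = omega0 ^ (k : Ordinal) * omega0 := by
    have hcast : ((k+1 : ℕ) : Ordinal) = 1 + (k : Ordinal) := by
      have : ((1+k : ℕ) : Ordinal) = 1 + (k : Ordinal) := by push_cast; ring_nf
      rw [← this, Nat.add_comm]
    have h1 : omega0 * omega0 ^ (k : Ordinal) = omega0 ^ ((k+1 : ℕ) : Ordinal) := by
      rw [hcast, opow_add, opow_one]
    have h2 : omega0 ^ (k : Ordinal) * omega0 = omega0 ^ ((k+1 : ℕ) : Ordinal) := by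
      push_cast
      rw [opow_add, opow_one]
    rw [h1, h2]
  rw [h0, toOrd_replicate_zero_append, ← mul_assoc, hsw, mul_assoc]
  refine mul_lt_mul_of_pos_left ?_ (opow_pos (k : Ordinal) omega0_pos)
  show omega0 * toOrd (c :: r) + ((x:ℕ)+1 : ℕ) < omega0 * toOrd ((c+1) :: r)
  have hc : toOrd ((c+1) :: r) = toOrd (c :: r) + 1 := by
    show omega0 * toOrd r + ((c:ℕ)+1:ℕ) = (omega0 * toOrd r + c) + 1
    push_cast; rw [add_assoc]
  rw [hc, mul_add, mul_one]
  apply (add_lt_add_iff_left _).mpr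
  exact nat_lt_omega0 (x+1)

/-- The Hardy hierarchy `h^α` relative to `h`, for `α < ω^ω` given in Cantor normal
form by a little-endian coefficient list:  `h^0(x) = x`, `h^{α+1}(x) = h^α(h x)`,
`h^λ(x) = h^{λ(x)}(x)` with the standard fundamental sequences. -/
def hardy (h : ℕ → ℕ) : List ℕ → ℕ → ℕ
  | [], x => x
  | (c+1) :: ℓ, x => hardy h (c :: ℓ) (h x)
  | 0 :: ℓ, x =>
    match hs : splitNZ ℓ with
    | none => x
    | some (k, c, r) => hardy h (List.replicate k 0 ++ (x+1) :: c :: r) x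
  termination_by ℓ _ => toOrd ℓ
  decreasing_by
  · exact toOrd_succ_lt c ℓ
  · rw [splitNZ_eq hs]; exact toOrd_limit_lt x k c r

/-- The Cichoń hierarchy `h_α` relative to `h`:  `h_0(x) = 0`,
`h_{α+1}(x) = 1 + h_α(h x)`, `h_λ(x) = h_{λ(x)}(x)`. -/
def cichon (h : ℕ → ℕ) : List ℕ → ℕ → ℕ
  | [], _ => 0
  | (c+1) :: ℓ, x => 1 + cichon h (c :: ℓ) (h x)
  | 0 :: ℓ, x =>
    match hs : splitNZ ℓ with
    | none => 0
    | some (k, c, r) => cichon h (List.replicate k 0 ++ (x+1) :: c :: r) x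
  termination_by ℓ _ => toOrd ℓ
  decreasing_by
  · exact toOrd_succ_lt c ℓ
  · rw [splitNZ_eq hs]; exact toOrd_limit_lt x k c r

/-- An ordinal index `≤ ω^ω`: either `α < ω^ω` given by its CNF coefficient list,
or `ω^ω` itself (represented by `none`). -/
abbrev OrdIdx := Option (List ℕ)

/-- the CNF coefficient list of `ω^k` -/
def omegaPow (k : ℕ) : List ℕ := List.replicate k 0 ++ [1]

/-- Hardy hierarchy for indices `α ≤ ω^ω`, using `ω^ω(x) = ω^{x+1}`. -/
def hardyTop (h : ℕ → ℕ) : OrdIdx → ℕ → ℕ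
  | some ℓ, x => hardy h ℓ x
  | none, x => hardy h (omegaPow (x+1)) x

/-- Cichoń hierarchy for indices `α ≤ ω^ω`. -/
def cichonTop (h : ℕ → ℕ) : OrdIdx → ℕ → ℕ
  | some ℓ, x => cichon h ℓ x
  | none, x => cichon h (omegaPow (x+1)) x

end HardyCNF

namespace HardyCNF

theorem splitNZ_replicate (k c : ℕ) (r : List ℕ) :
    splitNZ (List.replicate k 0 ++ (c+1) :: r) = some (k, c, r) := by
  induction k with
  | zero => simp [splitNZ]
  | succ n ih => simp [List.replicate_succ, splitNZ, ih]

theorem splitNZ_append_zero : ∀ (t : List ℕ),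
    splitNZ (t ++ [0]) = (splitNZ t).map (fun p => (p.1, p.2.1, p.2.2 ++ [0]))
  | [] => by simp [splitNZ]
  | 0 :: t => by
      have ih := splitNZ_append_zero t
      cases hst : splitNZ t <;> simp [splitNZ, ih, hst]
  | (c+1) :: t => by simp [splitNZ]

theorem replicate_succ_append (j : ℕ) (L : List ℕ) :
    List.replicate (j+1) 0 ++ L = List.replicate j 0 ++ 0 :: L := by
  simp [List.replicate_succ', List.append_assoc]

theorem hardy_nil (h : ℕ → ℕ) (x : ℕ) : hardy h [] x = x := by rw [hardy]

theorem hardy_succ (h : ℕ → ℕ) (c : ℕ) (t : List ℕ) (x : ℕ) :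
    hardy h ((c+1) :: t) x = hardy h (c :: t) (h x) := by rw [hardy]

theorem hardy_lim_none (h : ℕ → ℕ) {t : List ℕ} (hs : splitNZ t = none) (x : ℕ) :
    hardy h (0 :: t) x = x := by rw [hardy, hs]

theorem hardy_lim (h : ℕ → ℕ) {t : List ℕ} {k c : ℕ} {r : List ℕ}
    (hs : splitNZ t = some (k, c, r)) (x : ℕ) :
    hardy h (0 :: t) x = hardy h (List.replicate k 0 ++ (x+1) :: c :: r) x := by
  rw [hardy, hs]

theorem hardy_append_zero (h : ℕ → ℕ) (ℓ : List ℕ) (x : ℕ) :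
    hardy h (ℓ ++ [0]) x = hardy h ℓ x := by
  match ℓ with
  | [] =>
    show hardy h (0 :: []) x = hardy h [] x
    rw [hardy_lim_none h (show splitNZ ([] : List ℕ) = none from rfl), hardy_nil]
  | (c+1) :: t =>
    show hardy h ((c+1) :: (t ++ [0])) x = _
    rw [hardy_succ, hardy_succ]
    exact hardy_append_zero h (c :: t) (h x)
  | 0 :: t =>
    show hardy h (0 :: (t ++ [0])) x = hardy h (0 :: t) x
    cases hs : splitNZ t with
    | none =>
      have hs' : splitNZ (t ++ [0]) = none := by rw [splitNZ_append_zero, hs]; rfl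
      rw [hardy_lim_none h hs', hardy_lim_none h hs]
    | some p =>
      obtain ⟨k, c, r⟩ := p
      have hs' : splitNZ (t ++ [0]) = some (k, c, r ++ [0]) := by
        rw [splitNZ_append_zero, hs]; rfl
      rw [hardy_lim h hs', hardy_lim h hs]
      have e : List.replicate k 0 ++ (x+1) :: c :: (r ++ [0])
          = (List.replicate k 0 ++ (x+1) :: c :: r) ++ [0] := by simp
      rw [e]
      exact hardy_append_zero h (List.replicate k 0 ++ (x+1) :: c :: r) x
  termination_by toOrd ℓ
  decreasing_by
  · exact toOrd_succ_lt c t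
  · rw [splitNZ_eq hs]; exact toOrd_limit_lt x k c r

/-- `G h k d` is `h^{ω^k · d}`. -/
def G (h : ℕ → ℕ) : ℕ → ℕ → ℕ → ℕ
  | _, 0, x => x
  | 0, d+1, x => G h 0 d (h x)
  | k+1, d+1, x => G h (k+1) d (G h k (x+1) x)
  termination_by k d _ => (k, d)

theorem G_infl (h : ℕ → ℕ) (hinfl : ∀ x, x ≤ h x) (k d x : ℕ) : x ≤ G h k d x := by
  match k, d with
  | k, 0 => rw [G]
  | 0, d+1 =>
    rw [G]
    exact le_trans (hinfl x) (G_infl h hinfl 0 d (h x))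
  | k+1, d+1 =>
    rw [G]
    exact le_trans (G_infl h hinfl k (x+1) x) (G_infl h hinfl (k+1) d _)
  termination_by (k, d)

theorem hardy_comp (h : ℕ → ℕ) : ∀ (k d c : ℕ) (rest : List ℕ) (x : ℕ),
    hardy h (List.replicate k 0 ++ (c+d) :: rest) x
      = hardy h (List.replicate k 0 ++ c :: rest) (G h k d x) := by
  intro k
  induction k with
  | zero =>
    intro d
    induction d with
    | zero => intro c rest x; rw [G]; norm_num
    | succ e ihd =>
      intro c rest x
      show hardy h (((c+e)+1) :: rest) x = _
      rw [hardy_succ]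
      conv_rhs => rw [G]
      exact ihd c rest (h x)
  | succ j ihk =>
    intro d
    induction d with
    | zero => intro c rest x; rw [G]; norm_num
    | succ e ihd =>
      intro c rest x
      have e1 : List.replicate (j+1) 0 ++ ((c+(e+1)) :: rest)
          = 0 :: (List.replicate j 0 ++ ((c+e)+1) :: rest) := by
        rw [List.replicate_succ]; rfl
      rw [e1, hardy_lim h (splitNZ_replicate j (c+e) rest)]
      have h2 := ihk (x+1) 0 ((c+e) :: rest) x
      rw [Nat.zero_add] at h2
      rw [h2, ← replicate_succ_append j ((c+e) :: rest),
        ihd c rest (G h j (x+1) x)]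
      conv_rhs => rw [G]

theorem hardy_mono_infl (h : ℕ → ℕ) (hmono : ∀ x y, x ≤ y → h x ≤ h y)
    (hinfl : ∀ x, x ≤ h x) (ℓ : List ℕ) (x y : ℕ) (hxy : x ≤ y) :
    x ≤ hardy h ℓ x ∧ hardy h ℓ x ≤ hardy h ℓ y := by
  match ℓ with
  | [] =>
    rw [hardy_nil, hardy_nil]; exact ⟨le_refl x, hxy⟩
  | (c+1) :: t =>
    rw [hardy_succ, hardy_succ]
    obtain ⟨i1, m1⟩ := hardy_mono_infl h hmono hinfl (c :: t) (h x) (h y) (hmono x y hxy)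
    exact ⟨le_trans (hinfl x) i1, m1⟩
  | 0 :: t =>
    cases hs : splitNZ t with
    | none =>
      rw [hardy_lim_none h hs, hardy_lim_none h hs]; exact ⟨le_refl x, hxy⟩
    | some p =>
      obtain ⟨k, c, r⟩ := p
      rw [hardy_lim h hs, hardy_lim h hs]
      have hy1 : y + 1 = (x+1) + (y - x) := by omega
      have hc := hardy_comp h k (y-x) (x+1) (c :: r) y
      rw [hy1, hc]
      have hx2 : x ≤ G h k (y-x) y := le_trans hxy (G_infl h hinfl k (y-x) y)
      exact hardy_mono_infl h hmono hinfl (List.replicate k 0 ++ (x+1) :: c :: r) x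
        (G h k (y-x) y) hx2
  termination_by toOrd ℓ
  decreasing_by
  · exact toOrd_succ_lt c t
  · rw [splitNZ_eq hs]; exact toOrd_limit_lt x k c r

theorem hardy_omegaPow_step (h : ℕ → ℕ) (hmono : ∀ x y, x ≤ y → h x ≤ h y)
    (hinfl : ∀ x, x ≤ h x) (k z : ℕ) :
    hardy h (omegaPow k) z ≤ hardy h (omegaPow (k+1)) z := by
  have e : hardy h (omegaPow (k+1)) z
      = hardy h (List.replicate k 0 ++ (z+1) :: 0 :: []) z := by
    show hardy h (List.replicate (k+1) 0 ++ [1]) z = _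
    rw [List.replicate_succ, List.cons_append,
      hardy_lim h (splitNZ_replicate k 0 [])]
  have hz : z + 1 = 1 + z := by omega
  have hc := hardy_comp h k z 1 [0] z
  rw [e, hz, hc]
  have e2 : List.replicate k 0 ++ (1 :: [0]) = omegaPow k ++ [0] := by simp [omegaPow]
  rw [e2, hardy_append_zero]
  exact (hardy_mono_infl h hmono hinfl (omegaPow k) z (G h k z z)
    (G_infl h hinfl k z z)).2

theorem hardy_omegaPow_le (h : ℕ → ℕ) (hmono : ∀ x y, x ≤ y → h x ≤ h y)
    (hinfl : ∀ x, x ≤ h x) (k j z : ℕ) (hkj : k ≤ j) :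
    hardy h (omegaPow k) z ≤ hardy h (omegaPow j) z := by
  induction j with
  | zero => rw [Nat.le_zero.mp hkj]
  | succ n ih =>
    rcases Nat.lt_or_ge k (n+1) with hlt | hge
    · exact le_trans (ih (Nat.lt_succ_iff.mp hlt)) (hardy_omegaPow_step h hmono hinfl n z)
    · rw [Nat.le_antisymm hkj hge]

end HardyCNF


/-- If `h` is monotone and inflationary then so is every Hardy
function `h^α` for `α ≤ ω^ω`: for all `x ≤ y`, `x ≤ h^α(x) ≤ h^α(y)`. -/
theorem hardy_monotone_inflationary (h : ℕ → ℕ)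
    (hmono : ∀ x y, x ≤ y → h x ≤ h y) (hinfl : ∀ x, x ≤ h x)
    (α : HardyCNF.OrdIdx) (x y : ℕ) (hxy : x ≤ y) :
    x ≤ HardyCNF.hardyTop h α x ∧ HardyCNF.hardyTop h α x ≤ HardyCNF.hardyTop h α y := by
  match α with
  | some ℓ => exact HardyCNF.hardy_mono_infl h hmono hinfl ℓ x y hxy
  | none =>
    show x ≤ HardyCNF.hardy h (HardyCNF.omegaPow (x+1)) x ∧
      HardyCNF.hardy h (HardyCNF.omegaPow (x+1)) x
        ≤ HardyCNF.hardy h (HardyCNF.omegaPow (y+1)) y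
    constructor
    · exact (HardyCNF.hardy_mono_infl h hmono hinfl (HardyCNF.omegaPow (x+1)) x x le_rfl).1
    · calc HardyCNF.hardy h (HardyCNF.omegaPow (x+1)) x
          ≤ HardyCNF.hardy h (HardyCNF.omegaPow (x+1)) y :=
            (HardyCNF.hardy_mono_infl h hmono hinfl (HardyCNF.omegaPow (x+1)) x y hxy).2
        _ ≤ HardyCNF.hardy h (HardyCNF.omegaPow (y+1)) y :=
            HardyCNF.hardy_omegaPow_le h hmono hinfl (x+1) (y+1) y (by omega)
end
end

section
/- For every restricted pushdown system M = (Q, Σ, Γ, Δ) (i.e., one whose ε-rules are all deterministic), there exists a pushdown system M' = (Q, Σ, Γ, Δ') with the same control states and stack symbols, in which every ε-rule is deterministic and popping, such that for every p ∈ Q and Y ∈ Γ, the configuration pY in L_M is weakly bisimilar to the configuration pY in L_{M'} (in the disjoint union of the two labelled transition systems). -/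
namespace PDS

/-- a transition rule `pY →_a qγ` of a pushdown system (`a = none` means `ε`) -/
structure PRule (Q Act Γ : Type) where
  p : Q
  Y : Γ
  a : Option Act
  q : Q
  out : List Γ

/-- The transition relation of the LTS `L_M` generated by a pushdown system with
rule set `Δ`: each rule `pY →_a qγ` induces `pYγ' →_a qγγ'` for all `γ' ∈ Γ*`. -/
def pstep {Q Act Γ : Type} (Δ : Set (PRule Q Act Γ)) :
    Option Act → Q × List Γ → Q × List Γ → Prop := fun a s t =>
  ∃ r ∈ Δ, r.a = a ∧ ∃ γ' : List Γ, s = (r.p, r.Y :: γ') ∧ t = (r.q, r.out ++ γ')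

section Weak

variable {A S T : Type*}

/-- `s ⇒_a t` (for `a = ε` an arbitrary sequence of silent steps, for `a ∈ Σ` a
visible step surrounded by silent steps) -/
def wstep (tr : Option A → S → S → Prop) : Option A → S → S → Prop
  | none => Relation.ReflTransGen (tr none)
  | some a => fun s t => ∃ u v, Relation.ReflTransGen (tr none) s u ∧
      tr (some a) u v ∧ Relation.ReflTransGen (tr none) v t

/-- `R` is a weak bisimulation -/
def IsWeakBisim (tr : Option A → S → S → Prop) (R : S → S → Prop) : Prop :=
  ∀ s t, R s t →
    (∀ a s', tr a s s' → ∃ t', wstep tr a t t' ∧ R s' t') ∧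
    (∀ a t', tr a t t' → ∃ s', wstep tr a s s' ∧ R s' t')

/-- weak bisimilarity `≈`: the largest weak bisimulation -/
def WeakBisim (tr : Option A → S → S → Prop) (s t : S) : Prop :=
  ∃ R, IsWeakBisim tr R ∧ R s t

/-- the disjoint union of two labelled transition systems -/
def sumStep (t1 : A → S → S → Prop) (t2 : A → T → T → Prop) :
    A → S ⊕ T → S ⊕ T → Prop
  | a, Sum.inl s, Sum.inl s' => t1 a s s'
  | a, Sum.inr t, Sum.inr t' => t2 a t t'
  | _, _, _ => False

/-- regard an LTS without silent actions as one with (unused) silent actions -/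
def liftTr (tr : A → S → S → Prop) : Option A → S → S → Prop
  | none => fun _ _ => False
  | some a => tr a

end Weak

end PDS


namespace PDSAux
open PDS Relation

variable {Q Act Γ : Type}

section
variable (Δ : Set (PRule Q Act Γ))

/-- reachability by ε-steps in `L_M` -/
def Reach : Q × List Γ → Q × List Γ → Prop :=
  ReflTransGen (pstep Δ (none : Option Act))

/-- an ε-normal form: no ε-step available -/
def IsNf (s : Q × List Γ) : Prop := ∀ t, ¬ pstep Δ (none : Option Act) s t

def MNf (s x : Q × List Γ) : Prop := Reach Δ s x ∧ IsNf Δ x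

def HasEps (p : Q) (Y : Γ) : Prop :=
  ∃ r ∈ Δ, r.a = (none : Option Act) ∧ r.p = p ∧ r.Y = Y

def StepN : ℕ → Q × List Γ → Q × List Γ → Prop
  | 0 => Eq
  | n+1 => fun s t => ∃ m, pstep Δ (none : Option Act) s m ∧ StepN n m t

end

variable {Δ : Set (PRule Q Act Γ)}

lemma mk_pstep {r : PRule Q Act Γ} (hr : r ∈ Δ) {a : Option Act} (ha : r.a = a)
    (γ : List Γ) : pstep Δ a (r.p, r.Y :: γ) (r.q, r.out ++ γ) :=
  ⟨r, hr, ha, γ, rfl, rfl⟩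

lemma pstep_append {a : Option Act} {s t : Q × List Γ} (h : pstep Δ a s t)
    (γ : List Γ) : pstep Δ a (s.1, s.2 ++ γ) (t.1, t.2 ++ γ) := by
  obtain ⟨r, hr, ha, γ', rfl, rfl⟩ := h
  exact ⟨r, hr, ha, γ' ++ γ, by simp, by simp⟩

lemma stepN_append {n : ℕ} {s t : Q × List Γ} (h : StepN Δ n s t)
    (γ : List Γ) : StepN Δ n (s.1, s.2 ++ γ) (t.1, t.2 ++ γ) := by
  induction n generalizing s with
  | zero => cases h; rfl
  | succ n ih =>
    obtain ⟨m, h1, h2⟩ := h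
    exact ⟨(m.1, m.2 ++ γ), pstep_append h1 γ, ih h2⟩

lemma reach_of_stepN {n : ℕ} {s t : Q × List Γ} (h : StepN Δ n s t) :
    Reach Δ s t := by
  induction n generalizing s with
  | zero => cases h; exact ReflTransGen.refl
  | succ n ih => obtain ⟨m, h1, h2⟩ := h; exact (ih h2).head h1

lemma stepN_of_reach {s t : Q × List Γ} (h : Reach Δ s t) :
    ∃ n, StepN Δ n s t := by
  induction h using ReflTransGen.head_induction_on with
  | refl => exact ⟨0, rfl⟩
  | head h1 _ ih => obtain ⟨n, hn⟩ := ih; exact ⟨n+1, _, h1, hn⟩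

lemma reach_append {s t : Q × List Γ} (h : Reach Δ s t) (γ : List Γ) :
    Reach Δ (s.1, s.2 ++ γ) (t.1, t.2 ++ γ) := by
  obtain ⟨n, hn⟩ := stepN_of_reach h
  exact reach_of_stepN (stepN_append hn γ)

lemma isNf_nil (q : Q) : IsNf Δ (q, ([] : List Γ)) := by
  rintro t ⟨r, hr, ha, γ', h1, -⟩
  simp [Prod.ext_iff] at h1

lemma hasEps_of_cons_step {p : Q} {W : Γ} {δ : List Γ} {t : Q × List Γ}
    (h : pstep Δ (none : Option Act) (p, W :: δ) t) : HasEps Δ p W := by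
  obtain ⟨r, hr, ha, γ', h1, -⟩ := h
  simp [Prod.ext_iff] at h1
  exact ⟨r, hr, ha, h1.1.symm, h1.2.1.symm⟩

lemma isNf_cons {p : Q} {W : Γ} (h : ¬ HasEps Δ p W) (δ : List Γ) :
    IsNf Δ (p, W :: δ) := fun t ht => h (hasEps_of_cons_step ht)

lemma not_hasEps_of_isNf {p : Q} {W : Γ} {δ : List Γ}
    (h : IsNf Δ (p, W :: δ)) : ¬ HasEps Δ p W := by
  rintro ⟨r, hr, ha, rfl, rfl⟩
  exact h _ (mk_pstep hr ha δ)

end PDSAux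
namespace PDSAux
open PDS Relation

variable {Q Act Γ : Type} {Δ : Set (PRule Q Act Γ)}
variable (hdet : ∀ r ∈ Δ, r.a = none → ∀ r' ∈ Δ, r'.p = r.p → r'.Y = r.Y → r' = r)

include hdet in
lemma pstep_det {s t t' : Q × List Γ} {a : Option Act}
    (h : pstep Δ (none : Option Act) s t) (h' : pstep Δ a s t') :
    a = none ∧ t' = t := by
  obtain ⟨r, hr, ha, γ', rfl, rfl⟩ := h
  obtain ⟨r', hr', ha', γ'', h1, rfl⟩ := h'
  simp [Prod.ext_iff] at h1
  obtain ⟨h1, h2, rfl⟩ := h1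
  have := hdet r hr ha r' hr' h1.symm h2.symm
  subst this
  exact ⟨by rw [← ha', ha], rfl⟩

include hdet in
lemma stepN_det {n k : ℕ} {t u v : Q × List Γ} (h : StepN Δ n t u) (hu : IsNf Δ u)
    (h' : StepN Δ k t v) : k ≤ n ∧ StepN Δ (n - k) v u := by
  induction k generalizing t n with
  | zero => cases h'; simpa using h
  | succ k ih =>
    obtain ⟨m, h1, h2⟩ := h'
    cases n with
    | zero => cases h; exact absurd h1 (hu m)
    | succ n =>
      obtain ⟨m', h1', h2'⟩ := h
      obtain ⟨-, rfl⟩ := pstep_det hdet h1 h1'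
      have := ih h2' h2
      exact ⟨Nat.succ_le_succ this.1, by simpa using this.2⟩

include hdet in
lemma reach_of_mnf {t t' x : Q × List Γ} (h : Reach Δ t t') (hx : MNf Δ t x) :
    Reach Δ t' x := by
  induction h using ReflTransGen.head_induction_on with
  | refl => exact hx.1
  | head h1 h2 ih =>
    rcases hx.1.cases_head with rfl | ⟨c', hc', hr'⟩
    · exact absurd h1 (hx.2 _)
    · obtain ⟨-, rfl⟩ := pstep_det hdet hc' h1
      exact ih ⟨hr', hx.2⟩

include hdet in
lemma mnf_iff_of_reach {t t' x : Q × List Γ} (h : Reach Δ t t') :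
    MNf Δ t x ↔ MNf Δ t' x :=
  ⟨fun hx => ⟨reach_of_mnf hdet h hx, hx.2⟩, fun hx => ⟨h.trans hx.1, hx.2⟩⟩

include hdet in
lemma mnf_unique {t x y : Q × List Γ} (hx : MNf Δ t x) (hy : MNf Δ t y) : x = y := by
  have h := reach_of_mnf hdet hy.1 hx
  rcases h.cases_head with rfl | ⟨c, hc, -⟩
  · rfl
  · exact absurd hc (hy.2 _)

/-- decomposition of a terminating ε-run over a stack split -/
lemma reach_split {u : Q × List Γ} (hu : IsNf Δ u) (δ : List Γ)
    {s : Q × List Γ} (h : Reach Δ s u) :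
    ∀ p (α : List Γ), s = (p, α ++ δ) →
    (∃ q', Reach Δ (p, α) (q', ([] : List Γ)) ∧ Reach Δ (q', δ) u) ∨
    (∃ v, Reach Δ (p, α) v ∧ IsNf Δ v ∧ v.2 ≠ [] ∧ u = (v.1, v.2 ++ δ)) := by
  induction h using ReflTransGen.head_induction_on with
  | refl =>
    rintro p α rfl
    cases α with
    | nil => exact Or.inl ⟨p, ReflTransGen.refl, ReflTransGen.refl⟩
    | cons W rest =>
      refine Or.inr ⟨(p, W :: rest), ReflTransGen.refl, ?_, by simp, by simp⟩
      exact isNf_cons (not_hasEps_of_isNf hu) rest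
  | head h1 h2 ih =>
    rintro p α rfl
    cases α with
    | nil =>
      exact Or.inl ⟨p, ReflTransGen.refl, by simpa [Reach] using h2.head h1⟩
    | cons W rest =>
      obtain ⟨r, hr, ha, γ', h3, rfl⟩ := h1
      simp [Prod.ext_iff] at h3
      obtain ⟨rfl, rfl, rfl⟩ := h3
      have hstep : pstep Δ (none : Option Act) (r.p, r.Y :: rest) (r.q, r.out ++ rest) :=
        mk_pstep hr ha rest
      rcases ih r.q (r.out ++ rest) (by simp) with ⟨q', hq1, hq2⟩ | ⟨v, hv1, hv2, hv3, hv4⟩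
      · exact Or.inl ⟨q', hq1.head hstep, hq2⟩
      · exact Or.inr ⟨v, hv1.head hstep, hv2, hv3, hv4⟩

end PDSAux
namespace PDSAux
open PDS Relation

variable {Q Act Γ : Type}

/-- the new rule set: copy visible rules at ε-free heads; summarise terminating
ε-chains either by a popping ε-rule or by combined visible rules -/
def DP (Δ : Set (PRule Q Act Γ)) : Set (PRule Q Act Γ) :=
  {r | r ∈ Δ ∧ ¬ HasEps Δ r.p r.Y} ∪
  {r | ∃ p Y q, HasEps Δ p Y ∧ Reach Δ (p, [Y]) (q, ([] : List Γ)) ∧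
        r = ⟨p, Y, none, q, []⟩} ∪
  {r | ∃ p Y q Z β s, HasEps Δ p Y ∧ Reach Δ (p, [Y]) (q, Z :: β) ∧
        IsNf Δ (q, Z :: β) ∧ s ∈ Δ ∧ s.p = q ∧ s.Y = Z ∧ s.a ≠ none ∧
        r = ⟨p, Y, s.a, s.q, s.out ++ β⟩}

variable {Δ : Set (PRule Q Act Γ)}
variable (hdet : ∀ r ∈ Δ, r.a = none → ∀ r' ∈ Δ, r'.p = r.p → r'.Y = r.Y → r' = r)

lemma wstep_head {a : Act} {t m x : Q × List Γ} {D : Set (PRule Q Act Γ)}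
    (h1 : pstep D (none : Option Act) t m) (h2 : wstep (pstep D) (some a) m x) :
    wstep (pstep D) (some a) t x := by
  obtain ⟨u, v, hu, hv, hw⟩ := h2
  exact ⟨u, v, hu.head h1, hv, hw⟩

include hdet in
/-- key lemma: if `t` ε-reaches in `M` an ε-normal form at which a visible rule
`r` applies, then `t` can do the corresponding weak visible step in `M'`. -/
lemma wstep_vis {a : Act} {r : PRule Q Act Γ} (hr : r ∈ Δ) (hra : r.a = some a) :
    ∀ n t γ, StepN Δ n t (r.p, r.Y :: γ) → IsNf Δ (r.p, r.Y :: γ) →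
      wstep (pstep (DP Δ)) (some a) t (r.q, r.out ++ γ) := by
  intro n
  induction n using Nat.strong_induction_on with
  | _ n IH =>
  intro t γ hN hnf
  cases n with
  | zero =>
    cases hN
    have hmem : r ∈ DP Δ := Or.inl (Or.inl ⟨hr, not_hasEps_of_isNf hnf⟩)
    exact ⟨_, _, ReflTransGen.refl, mk_pstep hmem hra γ, ReflTransGen.refl⟩
  | succ n =>
    obtain ⟨c, hc, hN'⟩ := hN
    obtain ⟨p, W, δ, rfl⟩ : ∃ p W δ, t = (p, W :: δ) := by
      obtain ⟨r0, -, -, γ', rfl, -⟩ := hc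
      exact ⟨r0.p, r0.Y, γ', rfl⟩
    have hhe : HasEps Δ p W := hasEps_of_cons_step hc
    have hN2 : StepN Δ (n+1) (p, W :: δ) (r.p, r.Y :: γ) := ⟨c, hc, hN'⟩
    have hreach : Reach Δ (p, W :: δ) (r.p, r.Y :: γ) := reach_of_stepN hN2
    rcases reach_split hnf δ hreach p [W] rfl with
      ⟨q', hq1, hq2⟩ | ⟨v, hv1, hv2, hv3, hv4⟩
    · -- the ε-chain from (p,[W]) pops; use the new popping ε-rule and recurse
      obtain ⟨k, hk⟩ := stepN_of_reach hq1
      have hk1 : 1 ≤ k := by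
        cases k with
        | zero => cases hk; | succ k => exact Nat.succ_le_succ (Nat.zero_le k)
      have hkapp : StepN Δ k (p, W :: δ) (q', δ) := by
        simpa using stepN_append hk δ
      obtain ⟨m, hm⟩ := stepN_of_reach hq2
      have hcount := stepN_det hdet hN2 hnf hkapp
      have hlt : n + 1 - k < n + 1 := by omega
      have hwv := IH _ hlt _ _ hcount.2 hnf
      have hrule : (⟨p, W, none, q', []⟩ : PRule Q Act Γ) ∈ DP Δ :=
        Or.inl (Or.inr ⟨p, W, q', hhe, hq1, rfl⟩)
      exact wstep_head (mk_pstep hrule rfl δ) hwv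
    · -- the ε-chain from (p,[W]) reaches a visible nf; use the combined rule
      obtain ⟨q0, l⟩ := v
      cases l with
      | nil => simp at hv3
      | cons Z0 β =>
        simp only [Prod.ext_iff, List.cons.injEq] at hv4
        obtain ⟨rfl, rfl, rfl⟩ := hv4
        have hrule : (⟨p, W, r.a, r.q, r.out ++ β⟩ : PRule Q Act Γ) ∈ DP Δ :=
          Or.inr ⟨p, W, r.p, r.Y, β, r, hhe, hv1, hv2, hr, rfl, rfl, by simp [hra], rfl⟩
        have hst := mk_pstep hrule hra δ
        rw [List.append_assoc] at hst
        exact ⟨_, _, ReflTransGen.refl, hst, ReflTransGen.refl⟩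

end PDSAux
namespace PDSAux
open PDS Relation

variable {Q Act Γ : Type} {Δ : Set (PRule Q Act Γ)}
variable (hdet : ∀ r ∈ Δ, r.a = none → ∀ r' ∈ Δ, r'.p = r.p → r'.Y = r.Y → r' = r)

lemma dp_eps {r : PRule Q Act Γ} (hr : r ∈ DP Δ) (ha : r.a = none) :
    ∃ p Y q, HasEps Δ p Y ∧ Reach Δ (p, [Y]) (q, ([] : List Γ)) ∧
      r = ⟨p, Y, none, q, []⟩ := by
  rcases hr with (⟨hmem, hne⟩ | h) | ⟨p, Y, q, Z, β, s, -, -, -, -, -, -, hsa, rfl⟩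
  · exact absurd ⟨r, hmem, ha, rfl, rfl⟩ hne
  · exact h
  · exact absurd ha hsa

include hdet in
lemma dp_eps_det {r : PRule Q Act Γ} (hr : r ∈ DP Δ) (ha : r.a = none) :
    (∀ r' ∈ DP Δ, r'.p = r.p → r'.Y = r.Y → r' = r) ∧ r.out = [] := by
  obtain ⟨p, Y, q, hhe, hre, rfl⟩ := dp_eps hr ha
  refine ⟨?_, rfl⟩
  rintro r' hr' hp hY
  simp only at hp hY
  rcases hr' with (⟨hmem, hne⟩ | ⟨p', Y', q', hhe', hre', rfl⟩) |
      ⟨p', Y', q', Z', β', s, hhe', hre', hnf', -, -, -, -, rfl⟩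
  · rw [hp, hY] at hne; exact absurd hhe hne
  · simp only at hp hY
    subst hp; subst hY
    have := mnf_unique hdet (x := (q', ([] : List Γ))) (y := (q, ([] : List Γ)))
      ⟨hre', isNf_nil q'⟩ ⟨hre, isNf_nil q⟩
    simp only [Prod.mk.injEq] at this
    rw [this.1]
  · simp only at hp hY
    subst hp; subst hY
    have := mnf_unique hdet ⟨hre', hnf'⟩ ⟨hre, isNf_nil q⟩
    simp [Prod.ext_iff] at this
include hdet in
lemma dp_finite (hQ : Finite Q) (hΓ : Finite Γ) (hΔ : Δ.Finite) :
    (DP Δ).Finite := by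
  haveI := hQ; haveI := hΓ
  classical
  have h1 : ({r | r ∈ Δ ∧ ¬ HasEps Δ r.p r.Y} : Set (PRule Q Act Γ)).Finite :=
    hΔ.subset fun r hr => hr.1
  have h2 : ({r | ∃ p Y q, HasEps Δ p Y ∧ Reach Δ (p, [Y]) (q, ([] : List Γ)) ∧
      r = ⟨p, Y, none, q, []⟩} : Set (PRule Q Act Γ)).Finite := by
    have : ({r | ∃ p Y q, HasEps Δ p Y ∧ Reach Δ (p, [Y]) (q, ([] : List Γ)) ∧
        r = ⟨p, Y, none, q, []⟩} : Set (PRule Q Act Γ)) ⊆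
        (fun x : Q × Γ × Q => (⟨x.1, x.2.1, none, x.2.2, []⟩ : PRule Q Act Γ)) ''
          Set.univ := by
      rintro r ⟨p, Y, q, -, -, rfl⟩
      exact ⟨(p, Y, q), Set.mem_univ _, rfl⟩
    exact (Set.finite_univ.image _).subset this
  have h3 : ({r | ∃ p Y q Z β s, HasEps Δ p Y ∧ Reach Δ (p, [Y]) (q, Z :: β) ∧
      IsNf Δ (q, Z :: β) ∧ s ∈ Δ ∧ s.p = q ∧ s.Y = Z ∧ s.a ≠ none ∧
      r = ⟨p, Y, s.a, s.q, s.out ++ β⟩} : Set (PRule Q Act Γ)).Finite := by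
    set f : Q × Γ → List Γ := fun x =>
      if h : ∃ v, MNf Δ (x.1, [x.2]) v then h.choose.2.tail else []
    have hsub : ({r | ∃ p Y q Z β s, HasEps Δ p Y ∧ Reach Δ (p, [Y]) (q, Z :: β) ∧
        IsNf Δ (q, Z :: β) ∧ s ∈ Δ ∧ s.p = q ∧ s.Y = Z ∧ s.a ≠ none ∧
        r = ⟨p, Y, s.a, s.q, s.out ++ β⟩} : Set (PRule Q Act Γ)) ⊆
        (fun x : (Q × Γ) × PRule Q Act Γ =>
          (⟨x.1.1, x.1.2, x.2.a, x.2.q, x.2.out ++ f x.1⟩ : PRule Q Act Γ)) ''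
          (Set.univ ×ˢ Δ) := by
      rintro r ⟨p, Y, q, Z, β, s, hhe, hre, hnf, hs, -, -, -, rfl⟩
      refine ⟨((p, Y), s), ⟨Set.mem_univ _, hs⟩, ?_⟩
      have hex : ∃ v, MNf Δ ((p, Y).1, [(p, Y).2]) v := ⟨(q, Z :: β), hre, hnf⟩
      have huniq : hex.choose = (q, Z :: β) := mnf_unique hdet hex.choose_spec ⟨hre, hnf⟩
      simp only [f, dif_pos hex, huniq, List.tail_cons]
    exact ((Set.finite_univ.prod hΔ).image _).subset hsub
  exact (h1.union h2).union h3

section SumLift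
variable {D : Set (PRule Q Act Γ)}

lemma rtg_inl {s s' : Q × List Γ} (h : ReflTransGen (pstep Δ (none : Option Act)) s s') :
    ReflTransGen (sumStep (pstep Δ) (pstep D) none) (Sum.inl s) (Sum.inl s') :=
  ReflTransGen.lift Sum.inl (fun _ _ hh => hh) _ _ h

lemma rtg_inr {t t' : Q × List Γ} (h : ReflTransGen (pstep D (none : Option Act)) t t') :
    ReflTransGen (sumStep (pstep Δ) (pstep D) none) (Sum.inr t) (Sum.inr t') :=
  ReflTransGen.lift Sum.inr (fun _ _ hh => hh) _ _ h

lemma wstep_inl {a : Act} {s s' : Q × List Γ} (h : wstep (pstep Δ) (some a) s s') :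
    wstep (sumStep (pstep Δ) (pstep D)) (some a) (Sum.inl s) (Sum.inl s') := by
  obtain ⟨u, v, h1, h2, h3⟩ := h
  exact ⟨Sum.inl u, Sum.inl v, rtg_inl h1, h2, rtg_inl h3⟩

lemma wstep_inr {a : Act} {t t' : Q × List Γ} (h : wstep (pstep D) (some a) t t') :
    wstep (sumStep (pstep Δ) (pstep D)) (some a) (Sum.inr t) (Sum.inr t') := by
  obtain ⟨u, v, h1, h2, h3⟩ := h
  exact ⟨Sum.inr u, Sum.inr v, rtg_inr h1, h2, rtg_inr h3⟩

end SumLift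

end PDSAux
namespace PDSAux
open PDS Relation

variable {Q Act Γ : Type} {Δ : Set (PRule Q Act Γ)}
variable (hdet : ∀ r ∈ Δ, r.a = none → ∀ r' ∈ Δ, r'.p = r.p → r'.Y = r.Y → r' = r)

include hdet in
lemma main_bisim :
    IsWeakBisim (sumStep (pstep Δ) (pstep (DP Δ)))
      (fun u v => ∃ s t, u = Sum.inl s ∧ v = Sum.inr t ∧
        ∀ x, MNf Δ s x ↔ MNf Δ t x) := by
  rintro u v ⟨s, t, rfl, rfl, hB⟩
  constructor
  · -- moves of `s` in `M` are matched by `t` in `M'`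
    rintro a s' hstep
    cases s' with
    | inr _ => exact hstep.elim
    | inl s' =>
      have hstep' : pstep Δ a s s' := hstep
      cases a with
      | none =>
        refine ⟨Sum.inr t, ReflTransGen.refl, s', t, rfl, rfl, fun x => ?_⟩
        exact (mnf_iff_of_reach hdet (ReflTransGen.single hstep')).symm.trans (hB x)
      | some a =>
        obtain ⟨r, hr, hra, γ, rfl, rfl⟩ := hstep'
        have hnf : IsNf Δ (r.p, r.Y :: γ) := by
          apply isNf_cons
          rintro ⟨r0, hr0, ha0, hp0, hY0⟩
          have := hdet r0 hr0 ha0 r hr hp0.symm hY0.symm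
          rw [← this] at ha0
          rw [ha0] at hra; cases hra
        have hMt : MNf Δ t (r.p, r.Y :: γ) :=
          (hB _).mp ⟨ReflTransGen.refl, hnf⟩
        obtain ⟨n, hn⟩ := stepN_of_reach hMt.1
        exact ⟨Sum.inr (r.q, r.out ++ γ),
          wstep_inr (wstep_vis hdet hr hra n t γ hn hnf),
          _, _, rfl, rfl, fun x => Iff.rfl⟩
  · -- moves of `t` in `M'` are matched by `s` in `M`
    rintro a t' hstep
    cases t' with
    | inl _ => exact hstep.elim
    | inr t' =>
      have hstep' : pstep (DP Δ) a t t' := hstep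
      obtain ⟨ρ, hρ, hρa, δ0, ht, rfl⟩ := hstep'
      rcases hρ with (⟨hmem, hne⟩ | ⟨p, W, q', hhe, hre, rfl⟩) |
        ⟨p, W, qq, Z, β, rr, hhe, hre, hnf, hrr, hrp, hrY, hrna, rfl⟩
      · -- a copied visible rule at an ε-free head
        subst ht
        cases a with
        | none => exact absurd ⟨ρ, hmem, hρa, rfl, rfl⟩ hne
        | some a =>
          have hnfT : IsNf Δ (ρ.p, ρ.Y :: δ0) := isNf_cons hne δ0
          have hRs : Reach Δ s (ρ.p, ρ.Y :: δ0) :=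
            ((hB _).mpr ⟨ReflTransGen.refl, hnfT⟩).1
          exact ⟨Sum.inl (ρ.q, ρ.out ++ δ0),
            wstep_inl ⟨_, _, hRs, mk_pstep hmem hρa δ0, ReflTransGen.refl⟩,
            _, _, rfl, rfl, fun x => Iff.rfl⟩
      · -- the new popping ε-rule
        subst ht
        simp only at hρa
        subst hρa
        have hR : Reach Δ (p, W :: δ0) (q', δ0) := by
          simpa using reach_append hre δ0
        refine ⟨Sum.inl s, ReflTransGen.refl, s, _, rfl, rfl, fun x => ?_⟩
        exact (hB x).trans (mnf_iff_of_reach hdet hR)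
      · -- a combined visible rule summarising an ε-chain
        subst ht
        simp only at hρa
        cases a with
        | none => exact absurd hρa hrna
        | some a =>
          have hR : Reach Δ (p, W :: δ0) (qq, Z :: (β ++ δ0)) := by
            simpa using reach_append hre δ0
          have hnfT : IsNf Δ (qq, Z :: (β ++ δ0)) :=
            isNf_cons (not_hasEps_of_isNf hnf) _
          have hRs : Reach Δ s (qq, Z :: (β ++ δ0)) :=
            ((hB _).mpr ⟨hR, hnfT⟩).1
          have hst : pstep Δ (some a) (rr.p, rr.Y :: (β ++ δ0))
              (rr.q, rr.out ++ (β ++ δ0)) := mk_pstep hrr hρa (β ++ δ0)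
          rw [hrp, hrY] at hst
          refine ⟨Sum.inl (rr.q, rr.out ++ (β ++ δ0)),
            wstep_inl ⟨_, _, hRs, hst, ReflTransGen.refl⟩,
            _, _, rfl, rfl, fun x => ?_⟩
          rw [List.append_assoc]

end PDSAux
open PDS in
/-- For every restricted pushdown system `M = (Q,Σ,Γ,Δ)` (all
`ε`-rules deterministic) there is a pushdown system `M' = (Q,Σ,Γ,Δ')` with the same
control states and stack symbols, in which every `ε`-rule is deterministic and
popping, such that every configuration `pY` of `L_M` is weakly bisimilar to the
configuration `pY` of `L_{M'}` (in the disjoint union of the two LTSs). -/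
theorem remove_nonpopping_eps (Q Act Γ : Type)
    (hQ : Finite Q) (hAct : Finite Act) (hΓ : Finite Γ)
    (Δ : Set (PRule Q Act Γ)) (hΔ : Δ.Finite)
    (hdet : ∀ r ∈ Δ, r.a = none → ∀ r' ∈ Δ, r'.p = r.p → r'.Y = r.Y → r' = r) :
    ∃ Δ' : Set (PRule Q Act Γ), Δ'.Finite ∧
      (∀ r ∈ Δ', r.a = none →
        (∀ r' ∈ Δ', r'.p = r.p → r'.Y = r.Y → r' = r) ∧ r.out = []) ∧
      ∀ (p : Q) (Y : Γ),
        WeakBisim (sumStep (pstep Δ) (pstep Δ'))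
          (Sum.inl (p, [Y])) (Sum.inr (p, [Y])) := by
  refine ⟨PDSAux.DP Δ, PDSAux.dp_finite hdet hQ hΓ hΔ,
    fun r hr ha => PDSAux.dp_eps_det hdet hr ha, fun p Y => ?_⟩
  exact ⟨_, PDSAux.main_bisim hdet,
    (p, [Y]), (p, [Y]), rfl, rfl, fun x => Iff.rfl⟩
end
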